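/- Consider the p-random labeling model: an auxiliary labeling Y' with Δ₂(Y') = 0 is fixed, and Y is obtained by flipping each edge label independently-or-correlated so that P(Y_e ≠ Y'_e) ≤ p for each edge e. Let T be a spanning tree of G with average stretch S, and predict each non-tree edge (i,j) by the product of Y-labels along the tree path from i to j. Then the expected number of prediction mistakes on the non-tree edges is at most p·|E|·(1 + S·|E|/|E|) — more precisely, E[M_T] ≤ p·|E| + p·Σ_{e'∈E∖E_T} |Path_T(e')| ≤ p·|E|·(1 + S). -/

import Mathlib

open scoped Classical
open MeasureTheory

/-- Cost of a clustering `f` of the vertices. -/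
noncomputable def clusterCost {V : Type*} [Fintype V] {β : Type*}
    (G : SimpleGraph V) (Y : Sym2 V → ℤ) (f : V → β) : ℕ :=
  (G.edgeFinset.filter fun e =>
    (Y e = -1 ∧ Sym2.lift ⟨fun u v => f u = f v, fun _ _ => propext eq_comm⟩ e) ∨
    (Y e = 1 ∧ ¬ Sym2.lift ⟨fun u v => f u = f v, fun _ _ => propext eq_comm⟩ e)).card

/-- Two-cluster correlation clustering index Δ₂(Y). -/
noncomputable def ccIndex2 {V : Type*} [Fintype V] (G : SimpleGraph V) (Y : Sym2 V → ℤ) : ℕ :=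
  sInf {c | ∃ f : V → Bool, clusterCost G Y f = c}

/-- In the `p`-random model (labels of a balanced labeling `Y'` flipped with probability
at most `p` per edge), predicting each non-tree edge by the product of labels along the
tree path of a spanning tree `T` of average stretch `S` makes at most
`p·|E|·(1 + S)` mistakes in expectation. -/


private lemma prodMeasurable {Ω V : Type*} [MeasurableSpace Ω]
    (Y : Ω → Sym2 V → ℤ) (hmeas : ∀ e, Measurable fun ω => Y ω e) :
    ∀ l : List (Sym2 V), Measurable fun ω => (l.map (Y ω)).prod
  | [] => by simp only [List.map_nil, List.prod_nil]; exact measurable_const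
  | e :: l => by
      simp only [List.map_cons, List.prod_cons]
      exact (hmeas e).mul (prodMeasurable Y hmeas l)

private lemma sign_exists {V : Type*} [Fintype V] (G : SimpleGraph V) (Y' : Sym2 V → ℤ)
    (hY' : ∀ e ∈ G.edgeSet, Y' e = 1 ∨ Y' e = -1) (hbal : ccIndex2 G Y' = 0) :
    ∃ σ : V → ℤ, (∀ v, σ v * σ v = 1) ∧ ∀ u v, G.Adj u v → Y' s(u,v) = σ u * σ v := by
  rcases (Nat.sInf_eq_zero.mp hbal) with h0 | h0
  · obtain ⟨f, hf⟩ := h0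
    refine ⟨fun v => if f v then 1 else -1, ?_, ?_⟩
    · intro v; by_cases h : f v <;> simp [h]
    · intro u v huv
      have hmem : s(u,v) ∈ G.edgeFinset := SimpleGraph.mem_edgeFinset.mpr huv
      have hfil := Finset.filter_eq_empty_iff.mp (Finset.card_eq_zero.mp hf) hmem
      simp only [Sym2.lift_mk] at hfil
      have hY := hY' _ (G.mem_edgeSet.mpr huv)
      by_cases h : f u = f v
      · rcases hY with h1 | h1
        · rw [h1]; cases hu : f u <;> cases hv : f v <;> simp_all
        · exact absurd (Or.inl ⟨h1, h⟩) hfil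
      · rcases hY with h1 | h1
        · exact absurd (Or.inr ⟨h1, h⟩) hfil
        · rw [h1]; cases hu : f u <;> cases hv : f v <;> simp_all
  · exact absurd h0 (Set.nonempty_iff_ne_empty.mp ⟨_, fun _ => true, rfl⟩)

private lemma walk_prod {V : Type*} {G T : SimpleGraph V} (hTG : T ≤ G)
    (σ : V → ℤ) (hσ : ∀ v, σ v * σ v = 1) (Y' : Sym2 V → ℤ)
    (hYσ : ∀ u v, G.Adj u v → Y' s(u,v) = σ u * σ v) :
    ∀ {u v : V} (w : T.Walk u v), (w.edges.map Y').prod = σ u * σ v := by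
  intro u v w
  induction w with
  | nil => simp [(hσ _)]
  | @cons u x v h w ih =>
      simp only [SimpleGraph.Walk.edges_cons, List.map_cons, List.prod_cons, ih,
        hYσ _ _ (hTG h)]
      linear_combination σ u * σ v * hσ x

theorem stmt13 {V : Type*} [Fintype V] (G T : SimpleGraph V) (hTG : T ≤ G)
    (hTree : T.IsTree)
    (a b : Sym2 V → V) (hab : ∀ e : Sym2 V, e = s(a e, b e))
    (path : ∀ u v : V, T.Walk u v) (hpath : ∀ u v, (path u v).IsPath)
    {Ω : Type*} [MeasurableSpace Ω] (μ : Measure Ω) [IsProbabilityMeasure μ]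
    (Y : Ω → Sym2 V → ℤ) (hmeas : ∀ e, Measurable fun ω => Y ω e)
    (Y' : Sym2 V → ℤ) (hY' : ∀ e ∈ G.edgeSet, Y' e = 1 ∨ Y' e = -1)
    (hbal : ccIndex2 G Y' = 0)
    (p : ℝ) (hp : 0 ≤ p)
    (hflip : ∀ e ∈ G.edgeSet, μ {ω | Y ω e ≠ Y' e} ≤ ENNReal.ofReal p)
    (S : ℝ)
    (hS : S = (1 / (G.edgeFinset.card : ℝ)) *
      (((Fintype.card V : ℝ) - 1) +
        ∑ e ∈ G.edgeFinset \ T.edgeFinset, ((path (a e) (b e)).length : ℝ))) :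
    ∫ ω, ((((G.edgeFinset \ T.edgeFinset).filter fun e =>
        Y ω e ≠ ((path (a e) (b e)).edges.map (Y ω)).prod).card : ℝ)) ∂μ ≤
      p * (G.edgeFinset.card : ℝ) * (1 + S) := by
  classical
  obtain ⟨σ, hσ, hYσ⟩ := sign_exists G Y' hY' hbal
  set D := G.edgeFinset \ T.edgeFinset with hD
  set M : Sym2 V → Set Ω :=
    fun e => {ω | Y ω e ≠ ((path (a e) (b e)).edges.map (Y ω)).prod} with hM
  have hprod : ∀ e ∈ G.edgeSet, ((path (a e) (b e)).edges.map Y').prod = Y' e := by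
    intro e he
    rw [walk_prod hTG σ hσ Y' hYσ]
    have hadj : G.Adj (a e) (b e) := G.mem_edgeSet.mp (by rw [← hab e]; exact he)
    conv_rhs => rw [hab e]
    exact (hYσ _ _ hadj).symm
  have hMeasM : ∀ e, MeasurableSet (M e) := by
    intro e
    have : M e = {ω | Y ω e = ((path (a e) (b e)).edges.map (Y ω)).prod}ᶜ := by
      ext ω; simp [hM]
    rw [this]
    exact (measurableSet_eq_fun (hmeas e) (prodMeasurable Y hmeas _)).compl
  have hcardeq : ∀ ω : Ω, (((D.filter fun e =>
        Y ω e ≠ ((path (a e) (b e)).edges.map (Y ω)).prod).card : ℝ))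
      = ∑ e ∈ D, Set.indicator (M e) (fun _ => (1:ℝ)) ω := by
    intro ω
    rw [Finset.card_filter]
    push_cast
    refine Finset.sum_congr rfl fun e _ => ?_
    by_cases h : Y ω e ≠ ((path (a e) (b e)).edges.map (Y ω)).prod <;>
      simp [Set.indicator, hM, h]
  have hint : ∫ ω, (((D.filter fun e =>
        Y ω e ≠ ((path (a e) (b e)).edges.map (Y ω)).prod).card : ℝ)) ∂μ
      = ∑ e ∈ D, (μ (M e)).toReal := by
    rw [integral_congr_ae (Filter.Eventually.of_forall hcardeq),
      integral_finset_sum D (fun e _ => (integrable_const (1:ℝ)).indicator (hMeasM e))]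
    refine Finset.sum_congr rfl fun e _ => ?_
    rw [integral_indicator_const (1:ℝ) (hMeasM e)]
    simp
    rfl
  have hbound : ∀ e ∈ D, (μ (M e)).toReal ≤ p * (1 + ((path (a e) (b e)).length : ℝ)) := by
    intro e heD
    have heG : e ∈ G.edgeSet := SimpleGraph.mem_edgeFinset.mp (Finset.mem_sdiff.mp heD).1
    set w := path (a e) (b e) with hw
    have hsub : M e ⊆ {ω | Y ω e ≠ Y' e} ∪ ⋃ e' ∈ w.edges.toFinset, {ω | Y ω e' ≠ Y' e'} := by
      intro ω hω
      by_contra hc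
      simp only [Set.mem_union, Set.mem_iUnion] at hc
      push_neg at hc
      obtain ⟨h1, h2⟩ := hc
      simp only [Set.mem_setOf_eq, not_not] at h1 h2
      apply hω
      show Y ω e = (w.edges.map (Y ω)).prod
      have hmapeq : w.edges.map (Y ω) = w.edges.map Y' :=
        List.map_congr_left fun e' he' => h2 e' (List.mem_toFinset.mpr he')
      rw [hmapeq, hprod e heG, h1]
    have h1 : μ (M e) ≤ ENNReal.ofReal p + (w.length : ENNReal) * ENNReal.ofReal p := by
      calc μ (M e) ≤ μ ({ω | Y ω e ≠ Y' e} ∪ ⋃ e' ∈ w.edges.toFinset, {ω | Y ω e' ≠ Y' e'}) :=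
            measure_mono hsub
        _ ≤ μ {ω | Y ω e ≠ Y' e} + μ (⋃ e' ∈ w.edges.toFinset, {ω | Y ω e' ≠ Y' e'}) :=
            measure_union_le _ _
        _ ≤ ENNReal.ofReal p + ∑ e' ∈ w.edges.toFinset, ENNReal.ofReal p := by
            refine add_le_add (hflip e heG) ((measure_biUnion_finset_le _ _).trans
              (Finset.sum_le_sum fun e' he' => hflip e'
                (SimpleGraph.edgeSet_mono hTG
                  (w.edges_subset_edgeSet (List.mem_toFinset.mp he')))))
        _ = _ := by
            rw [Finset.sum_const, nsmul_eq_mul,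
              List.toFinset_card_of_nodup (hpath (a e) (b e)).edges_nodup, w.length_edges]
    have h2 : (μ (M e)).toReal ≤
        (ENNReal.ofReal p + (w.length : ENNReal) * ENNReal.ofReal p).toReal :=
      ENNReal.toReal_mono (by finiteness) h1
    refine h2.trans_eq ?_
    rw [ENNReal.toReal_add (by finiteness) (by finiteness),
      ENNReal.toReal_mul, ENNReal.toReal_natCast, ENNReal.toReal_ofReal hp]
    ring
  have hDle : (D.card : ℝ) ≤ (G.edgeFinset.card : ℝ) := by
    exact_mod_cast Finset.card_le_card (Finset.sdiff_subset)
  have hVpos : (1 : ℝ) ≤ (Fintype.card V : ℝ) := by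
    have : Nonempty V := hTree.isConnected.nonempty
    exact_mod_cast Fintype.card_pos
  calc ∫ ω, (((D.filter fun e =>
        Y ω e ≠ ((path (a e) (b e)).edges.map (Y ω)).prod).card : ℝ)) ∂μ
      = ∑ e ∈ D, (μ (M e)).toReal := hint
    _ ≤ ∑ e ∈ D, p * (1 + ((path (a e) (b e)).length : ℝ)) := Finset.sum_le_sum hbound
    _ = p * ((D.card : ℝ) + ∑ e ∈ D, ((path (a e) (b e)).length : ℝ)) := by
        rw [← Finset.mul_sum, Finset.sum_add_distrib, Finset.sum_const, nsmul_eq_mul, mul_one]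
    _ ≤ p * (G.edgeFinset.card : ℝ) * (1 + S) := by
        by_cases hm : G.edgeFinset.card = 0
        · have hDempty : D = ∅ := by
            rw [hD, Finset.card_eq_zero.mp hm]; simp
          rw [hDempty, hm]
          simp
        · have hm' : (0:ℝ) < (G.edgeFinset.card : ℝ) := by exact_mod_cast Nat.pos_of_ne_zero hm
          have hmS : (G.edgeFinset.card : ℝ) * S =
              ((Fintype.card V : ℝ) - 1) + ∑ e ∈ D, ((path (a e) (b e)).length : ℝ) := by
            rw [hS, ← mul_assoc, mul_one_div, div_self (ne_of_gt hm'), one_mul]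
          have hsum0 : (0:ℝ) ≤ ∑ e ∈ D, ((path (a e) (b e)).length : ℝ) :=
            Finset.sum_nonneg fun e _ => by positivity
          nlinarith [mul_le_mul_of_nonneg_left hDle hp,
            mul_le_mul_of_nonneg_left hVpos hp]
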